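/- Let M be a simple matroid of rank r with exactly 3r-3 elements in which every line (rank-2 flat) has at most 3 elements. Suppose the characteristic polynomial χ(M;λ) has only real roots and χ(M;2) = 0. Then the number γ₃ of 3-point lines of M satisfies γ₃ ≥ 3r - 5. -/

import Mathlib

open Finset Polynomial

section MatroidDefs

variable {α : Type} [Fintype α] [DecidableEq α]

/-- The rank of a set `X` in a matroid `M`: the largest size of an independent subset
of `X`. -/
noncomputable def mrk (M : Matroid α) (X : Set α) : ℕ :=
  sSup {n | ∃ I, M.Indep I ∧ I ⊆ X ∧ I.ncard = n}

/-- A matroid is simple if every pair of elements of the ground set is independent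
(equivalently, it has no loops and no parallel pairs). -/
def mSimple (M : Matroid α) : Prop :=
  ∀ e f, e ∈ M.E → f ∈ M.E → M.Indep {e, f}

/-- The characteristic polynomial of a matroid on the ground set `α`, via the Whitney
rank expansion `χ(M;λ) = Σ_{A ⊆ E} (-1)^{|A|} λ^{r(E) - r(A)}` (which agrees with the
Möbius-function definition for loopless matroids). -/
noncomputable def charPoly (M : Matroid α) : Polynomial ℤ :=
  ∑ A : Finset α, C ((-1 : ℤ) ^ A.card) * X ^ (mrk M Set.univ - mrk M (A : Set α))

/-- The number of lines (rank-2 flats) of `M` with exactly `k` points. -/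
noncomputable def lineCount (M : Matroid α) (k : ℕ) : ℕ :=
  Nat.card {F : Set α | M.IsFlat F ∧ mrk M F = 2 ∧ F.ncard = k}

/-- Every line (rank-2 flat) of `M` has at most 3 points. -/
def linesAtMost3 (M : Matroid α) : Prop :=
  ∀ F : Set α, M.IsFlat F → mrk M F = 2 → F.ncard ≤ 3

/-- An integer polynomial has only real roots. -/
def onlyRealRoots (p : Polynomial ℤ) : Prop :=
  (p.map (Int.castRingHom ℝ)).Splits

/-- An integer polynomial has only integral roots: every complex root is an integer. -/
def onlyIntegerRoots (p : Polynomial ℤ) : Prop :=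
  ∀ z ∈ (p.map (Int.castRingHom ℂ)).roots, ∃ k : ℤ, z = (k : ℂ)

/-- A matroid is connected if no proper nonempty subset of the ground set gives an
additive separation of the rank. -/
def mConnected (M : Matroid α) : Prop :=
  M.E.Nonempty ∧ ∀ A : Set α, A ⊆ M.E → A.Nonempty → (M.E \ A).Nonempty →
    mrk M A + mrk M (M.E \ A) ≠ mrk M M.E

/-- A flat `X` of `M` is modular if every line `L` with
`rank(X ∨ L) = rank(X) + 1` meets `X`. -/
def modularFlat (M : Matroid α) (Y : Set α) : Prop :=
  M.IsFlat Y ∧ ∀ L : Set α, M.IsFlat L → mrk M L = 2 →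
    mrk M (Y ∪ L) = mrk M Y + 1 → (Y ∩ L).Nonempty

end MatroidDefs



set_option linter.unusedSectionVars false
set_option linter.unusedVariables false
set_option maxHeartbeats 1000000


lemma ms_esymm_one (s : Multiset ℝ) : s.esymm 1 = s.sum := by
  rw [Multiset.esymm, Multiset.powersetCard_one]
  simp

lemma ms_esymm_two (a : ℝ) (s : Multiset ℝ) :
    (a ::ₘ s).esymm 2 = a * s.sum + s.esymm 2 := by
  rw [Multiset.esymm, Multiset.powersetCard_cons, Multiset.map_add, Multiset.sum_add,
    Multiset.map_map, Multiset.esymm, add_comm]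
  rw [Multiset.powersetCard_one, Multiset.map_map]
  have h1 : ((Multiset.prod ∘ Multiset.cons a) ∘ singleton) = fun x : ℝ => a * id x := by
    ext x; simp
  rw [h1, Multiset.sum_map_mul_left, Multiset.map_id]

lemma ms_sq_sum (s : Multiset ℝ) :
    s.sum ^ 2 = (s.map (fun x => x ^ 2)).sum + 2 * s.esymm 2 := by
  induction s using Multiset.induction with
  | empty => simp [Multiset.esymm, Multiset.powersetCard_zero_right 1]
  | cons a s ih =>
      rw [Multiset.sum_cons, Multiset.map_cons, Multiset.sum_cons, ms_esymm_two]
      nlinarith [ih]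

lemma ms_sq_nonneg (s : Multiset ℝ) : (0:ℝ) ≤ (s.map (fun x => x ^ 2)).sum :=
  Multiset.sum_nonneg (by
    intro x hx
    obtain ⟨y, _, rfl⟩ := Multiset.mem_map.1 hx
    positivity)

lemma ms_cs (s : Multiset ℝ) :
    s.sum ^ 2 ≤ (Multiset.card s : ℝ) * (s.map (fun x => x ^ 2)).sum := by
  induction s using Multiset.induction with
  | empty => simp
  | cons a s ih =>
      rcases eq_or_ne s 0 with rfl | hs
      · simp
      rw [Multiset.sum_cons, Multiset.map_cons, Multiset.sum_cons, Multiset.card_cons]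
      push_cast
      set n := (Multiset.card s : ℝ) with hn
      set S := s.sum
      set Q := (s.map (fun x => x ^ 2)).sum
      have hn' : (0:ℝ) < n := by
        rw [hn]
        have : Multiset.card s ≠ 0 := by simpa using hs
        exact_mod_cast Nat.pos_of_ne_zero this
      have key : n * ((n+1)*(a^2+Q) - (a+S)^2) = (n*a - S)^2 + (n+1)*(n*Q - S^2) := by ring
      have h1 : (0:ℝ) ≤ n*Q - S^2 := by linarith
      have h0 : (0:ℝ) ≤ n * ((n+1)*(a^2+Q) - (a+S)^2) := by
        rw [key]; positivity
      have := le_of_mul_le_mul_left (by linarith : n * 0 ≤ n * ((n+1)*(a^2+Q) - (a+S)^2)) hn'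
      linarith

lemma nat_choose_two (n : ℕ) : 2 * n.choose 2 = n * (n - 1) := by
  induction n with
  | zero => simp
  | succ n ih =>
      rw [Nat.choose_succ_succ, Nat.mul_add, ih, Nat.choose_one_right, Nat.succ_sub_one]
      cases n with
      | zero => simp
      | succ m => rw [Nat.succ_sub_one]; ring

section rk
variable {α : Type} [Fintype α] [DecidableEq α] {M : Matroid α} {X Y I : Set α}

lemma mrk_bddAbove (M : Matroid α) (X : Set α) :
    BddAbove {n | ∃ I, M.Indep I ∧ I ⊆ X ∧ I.ncard = n} := by
  refine ⟨Fintype.card α, fun n hn => ?_⟩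
  obtain ⟨I, _, _, rfl⟩ := hn
  have := Set.ncard_le_ncard (Set.subset_univ I) Set.finite_univ
  simpa [Set.ncard_univ, Nat.card_eq_fintype_card] using this

lemma le_mrk (hI : M.Indep I) (hIX : I ⊆ X) : I.ncard ≤ mrk M X :=
  le_csSup (mrk_bddAbove M X) ⟨I, hI, hIX, rfl⟩

lemma mrk_eq_of_basis (hE : M.E = Set.univ) (hI : M.IsBasis I X) : mrk M X = I.ncard := by
  refine le_antisymm (csSup_le ⟨0, ∅, M.empty_indep, Set.empty_subset X, by simp⟩ ?_)
    (le_mrk hI.indep hI.subset)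
  rintro n ⟨J, hJ, hJX, rfl⟩
  obtain ⟨I', hI', hJI'⟩ := hJ.subset_isBasis_of_subset hJX (by rw [hE]; exact Set.subset_univ X)
  have h1 : J.ncard ≤ I'.ncard :=
    Set.ncard_le_ncard hJI' (Set.toFinite I')
  have h2 : I'.ncard = I.ncard := by
    have := hI'.encard_eq_encard hI
    simp [Set.ncard_def, this]
  omega

lemma exists_basis' (hE : M.E = Set.univ) (X : Set α) : ∃ I, M.IsBasis I X :=
  M.exists_isBasis X (by rw [hE]; exact Set.subset_univ X)

lemma mrk_mono (hXY : X ⊆ Y) : mrk M X ≤ mrk M Y := by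
  refine csSup_le_csSup (mrk_bddAbove M Y) ⟨0, ∅, M.empty_indep, Set.empty_subset X, by simp⟩ ?_
  rintro n ⟨J, hJ, hJX, rfl⟩
  exact ⟨J, hJ, hJX.trans hXY, rfl⟩

lemma mrk_indep (hE : M.E = Set.univ) (hI : M.Indep I) : mrk M I = I.ncard :=
  mrk_eq_of_basis hE hI.isBasis_self

lemma mrk_empty (hE : M.E = Set.univ) : mrk M (∅ : Set α) = 0 := by
  simpa using mrk_indep hE M.empty_indep

lemma mrk_closure (hE : M.E = Set.univ) (X : Set α) : mrk M (M.closure X) = mrk M X := by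
  obtain ⟨I, hI⟩ := exists_basis' hE X
  rw [mrk_eq_of_basis hE hI, mrk_eq_of_basis hE hI.isBasis_closure_right]

lemma mrk_le_top (hE : M.E = Set.univ) (X : Set α) : mrk M X ≤ mrk M Set.univ :=
  mrk_mono (Set.subset_univ X)

lemma mSimple.indep_singleton (hs : mSimple M) (hE : M.E = Set.univ) (a : α) :
    M.Indep {a} := by
  have := hs a a (by rw [hE]; trivial) (by rw [hE]; trivial)
  simpa using this

lemma mrk_singleton (hs : mSimple M) (hE : M.E = Set.univ) (a : α) : mrk M {a} = 1 := by
  rw [mrk_indep hE (hs.indep_singleton hE a)]; simp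

lemma mrk_eq_zero_iff (hs : mSimple M) (hE : M.E = Set.univ) :
    mrk M X = 0 ↔ X = ∅ := by
  constructor
  · intro h
    by_contra hne
    obtain ⟨a, ha⟩ := Set.nonempty_iff_ne_empty.2 hne
    have h1 : ({a} : Set α).ncard ≤ mrk M X :=
      le_mrk (hs.indep_singleton hE a) (by simpa using ha)
    simp at h1
    omega
  · rintro rfl; exact mrk_empty hE

lemma two_le_mrk (hs : mSimple M) (hE : M.E = Set.univ) {a b : α} (hab : a ≠ b)
    (ha : a ∈ X) (hb : b ∈ X) : 2 ≤ mrk M X := by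
  have h1 : ({a, b} : Set α).ncard ≤ mrk M X := by
    refine le_mrk (hs a b (by rw [hE]; trivial) (by rw [hE]; trivial)) ?_
    intro x hx
    rcases hx with rfl | rfl
    · exact ha
    · exact hb
  rwa [Set.ncard_pair hab] at h1

lemma mrk_pair (hs : mSimple M) (hE : M.E = Set.univ) {a b : α} (hab : a ≠ b) :
    mrk M {a, b} = 2 := by
  rw [mrk_indep hE (hs a b (by rw [hE]; trivial) (by rw [hE]; trivial)), Set.ncard_pair hab]

lemma mrk_eq_one_iff (hs : mSimple M) (hE : M.E = Set.univ) {A : Finset α} :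
    mrk M (A : Set α) = 1 ↔ A.card = 1 := by
  constructor
  · intro h
    rcases A.eq_empty_or_nonempty with rfl | ⟨a, ha⟩
    · simp [mrk_empty hE] at h
    by_contra hcard
    have h2 : ∃ b ∈ A, b ≠ a := by
      by_contra hb
      push_neg at hb
      apply hcard
      rw [Finset.eq_singleton_iff_unique_mem.2 ⟨ha, hb⟩]
      simp
    obtain ⟨b, hb, hba⟩ := h2
    have h3 := two_le_mrk (X := (A : Set α)) hs hE hba.symm (Finset.mem_coe.2 ha) (Finset.mem_coe.2 hb)
    omega
  · intro h
    obtain ⟨a, rfl⟩ := Finset.card_eq_one.1 h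
    simpa using mrk_singleton hs hE a
end rk

lemma flat_closure' {α : Type} (M : Matroid α) (X : Set α) : M.IsFlat (M.closure X) := by
  rw [Matroid.closure_def, Set.sInter_eq_iInter]
  have hne : Nonempty {F // F ∈ {F | M.IsFlat F ∧ X ∩ M.E ⊆ F}} :=
    ⟨⟨M.E, M.ground_isFlat, Set.inter_subset_right⟩⟩
  exact Matroid.IsFlat.iInter fun F => F.2.1

section coeffs
variable {α : Type} [Fintype α] [DecidableEq α] {M : Matroid α} {r : ℕ}

lemma card_le_three (hE : M.E = Set.univ) (hlines : linesAtMost3 M) {A : Finset α}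
    (h2 : mrk M (A : Set α) = 2) : A.card ≤ 3 := by
  have hsub : (A : Set α) ⊆ M.closure (A : Set α) :=
    M.subset_closure _ (by rw [hE]; exact Set.subset_univ _)
  have h3 : (M.closure (A : Set α)).ncard ≤ 3 :=
    hlines _ (flat_closure' M _) (by rw [mrk_closure hE]; exact h2)
  have := Set.ncard_le_ncard hsub (Set.toFinite _)
  rw [Set.ncard_coe_finset] at this
  omega

lemma charPoly_coeff (hE : M.E = Set.univ) (hr : mrk M Set.univ = r) {j : ℕ} (hj : j ≤ r) :
    (charPoly M).coeff j =
      ∑ A ∈ Finset.univ.filter (fun A : Finset α => mrk M (A : Set α) = r - j),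
        (-1 : ℤ) ^ A.card := by
  classical
  rw [charPoly, finset_sum_coeff, Finset.sum_filter]
  refine Finset.sum_congr rfl fun A _ => ?_
  rw [coeff_C_mul, coeff_X_pow, hr]
  have hle : mrk M (A : Set α) ≤ r := by rw [← hr]; exact mrk_le_top hE _
  by_cases h : mrk M (A : Set α) = r - j
  · rw [if_pos h, if_pos (by omega), mul_one]
  · rw [if_neg h, if_neg (by omega), mul_zero]

lemma charPoly_coeff_eq_zero (hE : M.E = Set.univ) (hr : mrk M Set.univ = r) {j : ℕ}
    (hj : r < j) : (charPoly M).coeff j = 0 := by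
  classical
  rw [charPoly, finset_sum_coeff]
  refine Finset.sum_eq_zero fun A _ => ?_
  rw [coeff_C_mul, coeff_X_pow, hr, if_neg (by omega), mul_zero]

lemma charPoly_coeff_top (hE : M.E = Set.univ) (hs : mSimple M) (hr : mrk M Set.univ = r) :
    (charPoly M).coeff r = 1 := by
  rw [charPoly_coeff hE hr le_rfl]
  have : Finset.univ.filter (fun A : Finset α => mrk M (A : Set α) = r - r) = {∅} := by
    ext A
    simp only [Finset.mem_filter, Finset.mem_univ, true_and, Finset.mem_singleton,
      Nat.sub_self]
    rw [mrk_eq_zero_iff hs hE]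
    simp
  rw [this]
  simp

lemma charPoly_natDegree (hE : M.E = Set.univ) (hs : mSimple M) (hr : mrk M Set.univ = r) :
    (charPoly M).natDegree = r := by
  have h1 : (charPoly M).natDegree ≤ r :=
    Polynomial.natDegree_le_iff_coeff_eq_zero.2 fun j hj => charPoly_coeff_eq_zero hE hr hj
  have h2 : (charPoly M).coeff r ≠ 0 := by
    rw [charPoly_coeff_top hE hs hr]; norm_num
  exact le_antisymm h1 (Polynomial.le_natDegree_of_ne_zero h2)

lemma charPoly_monic (hE : M.E = Set.univ) (hs : mSimple M) (hr : mrk M Set.univ = r) :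
    (charPoly M).Monic := by
  rw [Polynomial.Monic, Polynomial.leadingCoeff, charPoly_natDegree hE hs hr,
    charPoly_coeff_top hE hs hr]

lemma myFilterCardEq (k : ℕ) :
    (Finset.univ.filter (fun A : Finset α => A.card = k)).card = (Fintype.card α).choose k := by
  classical
  rw [← Finset.card_univ, ← Finset.card_powersetCard, Finset.powersetCard_eq_filter,
    Finset.powerset_univ]

lemma charPoly_coeff_sub_one (hE : M.E = Set.univ) (hs : mSimple M)
    (hr : mrk M Set.univ = r) (hr1 : 1 ≤ r) :
    (charPoly M).coeff (r - 1) = -(Fintype.card α : ℤ) := by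
  classical
  rw [charPoly_coeff hE hr (by omega)]
  have hrr : r - (r - 1) = 1 := by omega
  rw [hrr]
  have hset : Finset.univ.filter (fun A : Finset α => mrk M (A : Set α) = 1) =
      Finset.univ.filter (fun A : Finset α => A.card = 1) := by
    ext A
    simp only [Finset.mem_filter, Finset.mem_univ, true_and]
    exact mrk_eq_one_iff hs hE
  have hsum : ∑ A ∈ Finset.univ.filter (fun A : Finset α => A.card = 1), (-1 : ℤ) ^ A.card =
      ∑ A ∈ Finset.univ.filter (fun A : Finset α => A.card = 1), (-1 : ℤ) :=
    Finset.sum_congr rfl (fun A hA => by rw [(Finset.mem_filter.1 hA).2, pow_one])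
  rw [hset, hsum, Finset.sum_const, myFilterCardEq]
  simp [Nat.choose_one_right]

lemma charPoly_coeff_sub_two (hE : M.E = Set.univ) (hs : mSimple M)
    (hlines : linesAtMost3 M) (hr : mrk M Set.univ = r) (hr2 : 2 ≤ r) :
    (charPoly M).coeff (r - 2) =
      ((Fintype.card α).choose 2 : ℤ) -
        ((Finset.univ.filter (fun A : Finset α => A.card = 3 ∧ mrk M (A : Set α) = 2)).card : ℤ) := by
  classical
  rw [charPoly_coeff hE hr (by omega)]
  have hrr : r - (r - 2) = 2 := by omega
  rw [hrr]
  have hsplit : Finset.univ.filter (fun A : Finset α => mrk M (A : Set α) = 2) =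
      Finset.univ.filter (fun A : Finset α => A.card = 2) ∪
      Finset.univ.filter (fun A : Finset α => A.card = 3 ∧ mrk M (A : Set α) = 2) := by
    ext A
    simp only [Finset.mem_filter, Finset.mem_univ, true_and, Finset.mem_union]
    constructor
    · intro h
      have hle3 : A.card ≤ 3 := card_le_three hE hlines h
      have hne0 : A.card ≠ 0 := by
        intro h0
        rw [Finset.card_eq_zero.1 h0] at h
        simp [mrk_empty hE] at h
      have hne1 : A.card ≠ 1 := by
        intro h1
        have := (mrk_eq_one_iff hs hE).2 h1
        omega
      have hcases : A.card = 2 ∨ A.card = 3 := by omega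
      rcases hcases with h2 | h3
      · exact Or.inl h2
      · exact Or.inr ⟨h3, h⟩
    · rintro (h | ⟨h3, h⟩)
      · obtain ⟨a, b, hab, rfl⟩ := Finset.card_eq_two.1 h
        have : ((({a, b} : Finset α) : Set α)) = ({a, b} : Set α) := by simp
        rw [this, mrk_pair hs hE hab]
      · exact h
  have hdisj : Disjoint (Finset.univ.filter (fun A : Finset α => A.card = 2))
      (Finset.univ.filter (fun A : Finset α => A.card = 3 ∧ mrk M (A : Set α) = 2)) := by
    rw [Finset.disjoint_filter]
    rintro A _ h2 ⟨h3, _⟩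
    omega
  rw [hsplit, Finset.sum_union hdisj]
  have e1 : ∑ A ∈ Finset.univ.filter (fun A : Finset α => A.card = 2), (-1 : ℤ) ^ A.card =
      ((Fintype.card α).choose 2 : ℤ) := by
    have : ∑ A ∈ Finset.univ.filter (fun A : Finset α => A.card = 2), (-1 : ℤ) ^ A.card =
        ∑ A ∈ Finset.univ.filter (fun A : Finset α => A.card = 2), (1 : ℤ) :=
      Finset.sum_congr rfl (fun A hA => by rw [(Finset.mem_filter.1 hA).2]; norm_num)
    rw [this, Finset.sum_const, myFilterCardEq]
    simp
  have e2 : ∑ A ∈ Finset.univ.filter (fun A : Finset α => A.card = 3 ∧ mrk M (A : Set α) = 2),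
      (-1 : ℤ) ^ A.card =
      -((Finset.univ.filter (fun A : Finset α => A.card = 3 ∧ mrk M (A : Set α) = 2)).card : ℤ) := by
    have : ∑ A ∈ Finset.univ.filter (fun A : Finset α => A.card = 3 ∧ mrk M (A : Set α) = 2),
        (-1 : ℤ) ^ A.card =
        ∑ A ∈ Finset.univ.filter (fun A : Finset α => A.card = 3 ∧ mrk M (A : Set α) = 2),
          (-1 : ℤ) :=
      Finset.sum_congr rfl (fun A hA => by rw [(Finset.mem_filter.1 hA).2.1]; norm_num)
    rw [this, Finset.sum_const]
    simp
  rw [e1, e2]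
  ring

lemma lineCount_eq (hE : M.E = Set.univ) (hs : mSimple M) (hlines : linesAtMost3 M) :
    lineCount M 3 =
      (Finset.univ.filter (fun A : Finset α => A.card = 3 ∧ mrk M (A : Set α) = 2)).card := by
  classical
  rw [lineCount]
  have e : {A : Finset α // A.card = 3 ∧ mrk M (A : Set α) = 2} ≃
      {F : Set α // F ∈ {F : Set α | M.IsFlat F ∧ mrk M F = 2 ∧ F.ncard = 3}} := by
    refine ⟨fun A => ⟨(A.1 : Set α), ?_⟩, fun F => ⟨F.1.toFinset, ?_⟩, ?_, ?_⟩
    · obtain ⟨A, h3, h2⟩ := A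
      have hsub : (A : Set α) ⊆ M.closure (A : Set α) :=
        M.subset_closure _ (by rw [hE]; exact Set.subset_univ _)
      have hle : (M.closure (A : Set α)).ncard ≤ 3 :=
        hlines _ (flat_closure' M _) (by rw [mrk_closure hE]; exact h2)
      have heq : (A : Set α) = M.closure (A : Set α) := by
        refine Set.eq_of_subset_of_ncard_le hsub ?_ (Set.toFinite _)
        rw [Set.ncard_coe_finset, h3]
        exact hle
      refine ⟨heq ▸ flat_closure' M _, h2, by rw [Set.ncard_coe_finset, h3]⟩
    · obtain ⟨F, hF, h2, h3⟩ := F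
      constructor
      · rw [← Set.ncard_eq_toFinset_card']; exact h3
      · rw [Set.coe_toFinset]; exact h2
    · intro A
      ext x
      simp
    · intro F
      ext x
      simp
  rw [Nat.card_congr e.symm, Nat.card_eq_fintype_card, Fintype.card_subtype]

lemma charPoly_eval_one (hE : M.E = Set.univ) (hne : Nonempty α) :
    (charPoly M).eval 1 = 0 := by
  classical
  rw [charPoly, Polynomial.eval_finset_sum]
  simp only [Polynomial.eval_mul, Polynomial.eval_C, Polynomial.eval_pow, Polynomial.eval_X,
    one_pow, mul_one]
  rw [← Finset.powerset_univ]
  exact Finset.sum_powerset_neg_one_pow_card_of_nonempty Finset.univ_nonempty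

end coeffs


theorem stmt10 {α : Type} [Fintype α] [DecidableEq α] (M : Matroid α)
    (hE : M.E = Set.univ) (hsimple : mSimple M)
    (r : ℕ) (hr : mrk M Set.univ = r)
    (hcard : Fintype.card α + 3 = 3 * r)
    (hlines : linesAtMost3 M)
    (hreal : onlyRealRoots (charPoly M))
    (h2 : (charPoly M).eval 2 = 0) :
    3 * r ≤ lineCount M 3 + 5 := by
  classical
  -- r is at least 2
  have hr2 : 2 ≤ r := by
    by_contra hlt
    push_neg at hlt
    interval_cases r
    · omega
    · have hc0 : Fintype.card α = 0 := by omega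
      have hem : (Set.univ : Set α) = ∅ := by
        haveI := Fintype.card_eq_zero_iff.1 hc0
        exact Set.univ_eq_empty_iff.2 this
      rw [hem, mrk_empty hE] at hr
      omega
  have hne : Nonempty α := by
    have : 0 < Fintype.card α := by omega
    exact Fintype.card_pos_iff.1 this
  set e := Fintype.card α with he
  set γ := lineCount M 3 with hγ
  set p := charPoly M with hp
  set q := p.map (Int.castRingHom ℝ) with hq
  have hmonic : p.Monic := charPoly_monic hE hsimple hr
  have hdeg : p.natDegree = r := charPoly_natDegree hE hsimple hr
  have hqmonic : q.Monic := hmonic.map _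
  have hqdeg : q.natDegree = r := by
    rw [hq, Polynomial.Monic.natDegree_map hmonic]; exact hdeg
  have hq0 : q ≠ 0 := hqmonic.ne_zero
  have hroots : Multiset.card q.roots = r := by
    rw [← hqdeg]
    exact (Polynomial.splits_iff_card_roots (f := q)).1 hreal
  -- the two relevant coefficients of q
  have hcoeff1 : q.coeff (r - 1) = -(e : ℝ) := by
    rw [hq, Polynomial.coeff_map, charPoly_coeff_sub_one hE hsimple hr (by omega)]
    simp only [Int.coe_castRingHom]
    push_cast
    ring
  have hcoeff2 : q.coeff (r - 2) = (e.choose 2 : ℝ) - (γ : ℝ) := by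
    rw [hq, Polynomial.coeff_map, charPoly_coeff_sub_two hE hsimple hlines hr hr2,
      ← lineCount_eq hE hsimple hlines]
    simp only [Int.coe_castRingHom]
    push_cast
    ring
  -- Vieta: elementary symmetric functions of the roots
  have hvieta := fun (k : ℕ) (hk : k ≤ q.natDegree) =>
    Polynomial.coeff_eq_esymm_roots_of_card (by rw [hroots, hqdeg]) hk
  have hes1 : q.roots.esymm 1 = (e : ℝ) := by
    have h := hvieta (r - 1) (by omega)
    rw [hqdeg] at h
    have hrr : r - (r - 1) = 1 := by omega
    rw [hrr, hqmonic.leadingCoeff, hcoeff1] at h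
    simp at h
    linarith
  have hes2 : q.roots.esymm 2 = (e.choose 2 : ℝ) - (γ : ℝ) := by
    have h := hvieta (r - 2) (by omega)
    rw [hqdeg] at h
    have hrr : r - (r - 2) = 2 := by omega
    rw [hrr, hqmonic.leadingCoeff, hcoeff2] at h
    simp at h
    linarith
  have hsum : q.roots.sum = (e : ℝ) := by rw [← ms_esymm_one]; exact hes1
  -- sum of squares of the roots
  have he1 : 1 ≤ e := by omega
  have hc2 : 2 * (e.choose 2 : ℝ) = (e : ℝ) * ((e : ℝ) - 1) := by
    have h := nat_choose_two e
    have : ((2 * e.choose 2 : ℕ) : ℝ) = ((e * (e - 1) : ℕ) : ℝ) := by exact_mod_cast h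
    push_cast [Nat.cast_sub he1] at this
    linarith
  have hsq : (q.roots.map (fun x => x ^ 2)).sum = (e : ℝ) + 2 * (γ : ℝ) := by
    have h := ms_sq_sum q.roots
    rw [hsum, hes2] at h
    nlinarith [h, hc2]
  -- 1 and 2 are roots
  have hroot : ∀ z : ℤ, p.eval z = 0 → ((z : ℝ) ∈ q.roots) := by
    intro z hz
    rw [Polynomial.mem_roots']
    refine ⟨hq0, ?_⟩
    have hzz : q.eval ((Int.castRingHom ℝ) z) = (Int.castRingHom ℝ) (p.eval z) := by
      rw [hq, Polynomial.eval_map, Polynomial.eval₂_at_apply]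
    rw [hz] at hzz
    simpa using hzz
  have h1root : (1 : ℝ) ∈ q.roots := by
    have := hroot 1 (charPoly_eval_one hE hne)
    simpa using this
  have h2root : (2 : ℝ) ∈ q.roots := by
    have := hroot 2 h2
    simpa using this
  obtain ⟨t, ht⟩ := Multiset.exists_cons_of_mem h1root
  have h2t : (2 : ℝ) ∈ t := by
    rw [ht, Multiset.mem_cons] at h2root
    rcases h2root with h | h
    · norm_num at h
    · exact h
  obtain ⟨u, hu⟩ := Multiset.exists_cons_of_mem h2t
  have hdecomp : q.roots = 1 ::ₘ 2 ::ₘ u := by rw [ht, hu]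
  -- card and sums of the remaining roots
  have hcardu : r = Multiset.card u + 2 := by
    rw [← hroots, hdecomp]
    simp [Multiset.card_cons]
  have hcarduR : (Multiset.card u : ℝ) = (r : ℝ) - 2 := by
    have : ((r : ℕ) : ℝ) = ((Multiset.card u + 2 : ℕ) : ℝ) := by exact_mod_cast hcardu
    push_cast at this
    linarith
  have hsumu : u.sum = (e : ℝ) - 3 := by
    have h := hsum
    rw [hdecomp, Multiset.sum_cons, Multiset.sum_cons] at h
    linarith
  have hsqu : (u.map (fun x => x ^ 2)).sum = (e : ℝ) + 2 * (γ : ℝ) - 5 := by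
    have h := hsq
    rw [hdecomp, Multiset.map_cons, Multiset.map_cons, Multiset.sum_cons, Multiset.sum_cons] at h
    norm_num at h
    linarith
  -- Cauchy–Schwarz and the final arithmetic
  have hcs := ms_cs u
  have hqnn := ms_sq_nonneg u
  rw [hsumu, hsqu, hcarduR] at hcs
  rw [hsqu] at hqnn
  have hE3 : (e : ℝ) = 3 * (r : ℝ) - 3 := by
    have : ((e + 3 : ℕ) : ℝ) = ((3 * r : ℕ) : ℝ) := by exact_mod_cast hcard
    push_cast at this
    linarith
  rw [hE3] at hcs hqnn
  by_contra hgoal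
  push_neg at hgoal
  have h6n : γ + 6 ≤ 3 * r := by omega
  have hG : (γ : ℝ) + 6 ≤ 3 * (r : ℝ) := by exact_mod_cast h6n
  have hR : (2 : ℝ) ≤ (r : ℝ) := by exact_mod_cast hr2
  have hX : (0 : ℝ) ≤ (r : ℝ) - 2 := by linarith
  have key : (0 : ℝ) ≤ ((r : ℝ) - 2) * (2 * (γ : ℝ) - 6 * (r : ℝ) + 10) := by
    nlinarith [hcs]
  have h6 : 2 * (γ : ℝ) - 6 * (r : ℝ) + 10 ≤ -2 := by linarith
  have hmul : ((r : ℝ) - 2) * (2 * (γ : ℝ) - 6 * (r : ℝ) + 10) ≤ ((r : ℝ) - 2) * (-2) :=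
    mul_le_mul_of_nonneg_left h6 hX
  have hRle : (r : ℝ) ≤ 2 := by linarith
  linarith
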